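/- Let r ∈ ℕ with r ≥ 2 and p ∈ (0,1). Let N₁ be negative binomial with parameters r+1 and p, and N₂ be negative binomial with parameters r−1 and 1−p, independent, and let ĝ = (r/(N₁−1))·(N₂/(r−1)) and g = p/(1−p). Then Var[ĝ]/g² < 1/(r−1), where Var[ĝ] = E[ĝ²] − (E[ĝ])² and all expectations are the corresponding (double) series over n₁ ≥ r+1 and n₂ ≥ r−1 weighted by the negative binomial probabilities. -/

import Mathlib

open scoped BigOperators
open Finset

section helpers

private lemma choose_id_real (a b : ℕ) :
    ((a + 1).choose (b + 1) : ℝ) * (b + 1) = (a.choose b : ℝ) * (a + 1) := by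
  have h := Nat.add_one_mul_choose_eq a b
  exact_mod_cast h.symm.trans (Nat.mul_comm _ _)

private lemma tsumL1 (m : ℕ) {x : ℝ} (hx : |x| < 1) :
    ∑' k : ℕ, ((k + m).choose m : ℝ) * x ^ k = 1 / (1 - x) ^ (m + 1) :=
  tsum_choose_mul_geometric_of_norm_lt_one m (by simpa using hx)

private lemma sumL1 (m : ℕ) {x : ℝ} (hx : |x| < 1) :
    Summable (fun k : ℕ => ((k + m).choose m : ℝ) * x ^ k) :=
  summable_choose_mul_geometric_of_norm_lt_one m (by simpa using hx)

private lemma tsumL2 (m : ℕ) {x : ℝ} (hx : |x| < 1) :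
    ∑' k : ℕ, ((k + m).choose m : ℝ) * x ^ k * ((k : ℝ) + m + 1)
      = (m + 1) / (1 - x) ^ (m + 2) := by
  have e : ∀ k : ℕ, ((k + m).choose m : ℝ) * x ^ k * ((k : ℝ) + m + 1)
      = ((m : ℝ) + 1) * (((k + (m + 1)).choose (m + 1) : ℝ) * x ^ k) := by
    intro k
    have h := choose_id_real (k + m) m
    rw [show k + m + 1 = k + (m + 1) from by omega] at h
    push_cast at h ⊢
    linear_combination (-(x ^ k)) * h
  rw [tsum_congr e, tsum_mul_left, tsumL1 (m + 1) hx]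
  ring

private lemma tsumL3 (m : ℕ) {x : ℝ} (hx : |x| < 1) :
    ∑' k : ℕ, ((k + m).choose m : ℝ) * x ^ k * ((k : ℝ) + m + 1) ^ 2
      = ((m : ℝ) + 1) * (m + 2) / (1 - x) ^ (m + 3) - ((m : ℝ) + 1) / (1 - x) ^ (m + 2) := by
  have e : ∀ k : ℕ, ((k + m).choose m : ℝ) * x ^ k * ((k : ℝ) + m + 1) ^ 2
      = ((m : ℝ) + 1) * ((m : ℝ) + 2) * (((k + (m + 2)).choose (m + 2) : ℝ) * x ^ k)
        - ((m : ℝ) + 1) * (((k + (m + 1)).choose (m + 1) : ℝ) * x ^ k) := by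
    intro k
    have h1 := choose_id_real (k + m) m
    rw [show k + m + 1 = k + (m + 1) from by omega] at h1
    have h2 := choose_id_real (k + m + 1) (m + 1)
    rw [show k + m + 1 + 1 = k + (m + 2) from by omega,
      show m + 1 + 1 = m + 2 from by omega,
      show k + m + 1 = k + (m + 1) from by omega] at h2
    push_cast at h1 h2 ⊢
    linear_combination (-(x ^ k * ((k : ℝ) + m + 1))) * h1 + (-(((m : ℝ) + 1) * x ^ k)) * h2
  rw [tsum_congr e,
    Summable.tsum_sub ((sumL1 (m + 2) hx).mul_left _) ((sumL1 (m + 1) hx).mul_left _),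
    tsum_mul_left, tsum_mul_left, tsumL1 (m + 2) hx, tsumL1 (m + 1) hx]
  ring

private lemma Astep (m n : ℕ) :
    ((n + m + 2).choose (m + 1) : ℝ) / ((n : ℝ) + m + 3)
      ≤ ((n + m + 1).choose (m + 1) : ℝ) / (((n : ℝ) + m + 2) * ((m : ℝ) + 2))
        + ((n + m + 1).choose m : ℝ) / ((m : ℝ) + 2) := by
  set A : ℝ := ((n + m + 1).choose (m + 1) : ℝ) with hA
  set B : ℝ := ((n + m + 1).choose m : ℝ) with hB
  have hP : ((n + m + 2).choose (m + 1) : ℝ) = B + A := by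
    rw [hA, hB, ← Nat.cast_add, ← Nat.choose_succ_succ]
  have hr : A * ((m : ℝ) + 1) = B * ((n : ℝ) + 1) := by
    have h := Nat.choose_succ_right_eq (n + m + 1) m
    rw [show n + m + 1 - m = n + 1 from by omega] at h
    rw [hA, hB]; exact_mod_cast h
  have h0 : (0 : ℝ) ≤ A := by rw [hA]; positivity
  have hRHS : A / (((n : ℝ) + m + 2) * ((m : ℝ) + 2)) + B / ((m : ℝ) + 2)
      = (A + B * ((n : ℝ) + m + 2)) / (((n : ℝ) + m + 2) * ((m : ℝ) + 2)) := by
    field_simp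
  have key : (B + A) * (((n : ℝ) + m + 2) * ((m : ℝ) + 2)) + A
      = (A + B * ((n : ℝ) + m + 2)) * ((n : ℝ) + m + 3) := by
    linear_combination ((n : ℝ) + m + 2) * hr
  rw [hP, hRHS, div_le_div_iff₀ (by positivity) (by positivity)]
  linarith [key, h0]

private lemma Ble (m : ℕ) : ∀ n : ℕ,
    ((n + (m + 1)).choose (m + 1) : ℝ) / ((n : ℝ) + m + 2)
      ≤ ∑ k ∈ Finset.range (n + 1), ((k + m).choose m : ℝ) * (1 / ((m : ℝ) + 2)) ^ (n - k + 1) := by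
  intro n
  induction n with
  | zero => simp
  | succ n ih =>
    have hrec : ∑ k ∈ Finset.range (n + 2), ((k + m).choose m : ℝ) * (1 / ((m : ℝ) + 2)) ^ (n + 1 - k + 1)
        = (∑ k ∈ Finset.range (n + 1), ((k + m).choose m : ℝ) * (1 / ((m : ℝ) + 2)) ^ (n - k + 1)) * (1 / ((m : ℝ) + 2))
          + ((n + 1 + m).choose m : ℝ) * (1 / ((m : ℝ) + 2)) := by
      rw [Finset.sum_range_succ, Finset.sum_mul]
      congr 1
      · apply Finset.sum_congr rfl
        intro k hk
        rw [Finset.mem_range] at hk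
        rw [show n + 1 - k + 1 = (n - k + 1) + 1 from by omega, pow_succ]
        ring
      · rw [show n + 1 - (n + 1) + 1 = 1 from by omega, pow_one]
    have step := Astep m n
    have hS := mul_le_mul_of_nonneg_right ih
      (le_of_lt (show (0 : ℝ) < 1 / ((m : ℝ) + 2) by positivity))
    have heq : ((n + (m + 1)).choose (m + 1) : ℝ) / ((n : ℝ) + m + 2) * (1 / ((m : ℝ) + 2))
        = ((n + m + 1).choose (m + 1) : ℝ) / (((n : ℝ) + m + 2) * ((m : ℝ) + 2)) := by
      rw [show n + (m + 1) = n + m + 1 from by omega, div_mul_div_comm, mul_one]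
    have heq2 : ((n + m + 1).choose m : ℝ) * (1 / ((m : ℝ) + 2))
        = ((n + m + 1).choose m : ℝ) / ((m : ℝ) + 2) := by ring
    have hd : ((n + 1 : ℕ) : ℝ) + m + 2 = (n : ℝ) + m + 3 := by push_cast; ring
    rw [hrec, show n + 1 + (m + 1) = n + m + 2 from by omega,
      show n + 1 + m = n + m + 1 from by omega, hd]
    linarith [step, hS]

end helpers

section core
private lemma core (m : ℕ) {x : ℝ} (hx0 : 0 < x) (hx1 : x < 1) :
    ∑' n : ℕ, ((n + (m + 1)).choose (m + 1) : ℝ) * x ^ n / ((n : ℝ) + m + 2)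
      < 1 / ((1 - x) ^ (m + 1) * (((m : ℝ) + 2) - x)) := by
  have hxabs : |x| < 1 := by rw [abs_of_pos hx0]; exact hx1
  have hm2 : (0 : ℝ) < (m : ℝ) + 2 := by positivity
  have hm2x : (0 : ℝ) < ((m : ℝ) + 2) - x := by nlinarith [Nat.cast_nonneg (α := ℝ) m]
  set f : ℕ → ℝ := fun n => ((n + m).choose m : ℝ) * x ^ n with hf
  set g : ℕ → ℝ := fun n => (1 / ((m : ℝ) + 2)) * (x / ((m : ℝ) + 2)) ^ n with hg
  have hfs : Summable f := sumL1 m hxabs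
  have hgr0 : (0 : ℝ) ≤ x / ((m : ℝ) + 2) := by positivity
  have hgr1 : x / ((m : ℝ) + 2) < 1 := by
    rw [div_lt_one hm2]
    nlinarith [Nat.cast_nonneg (α := ℝ) m]
  have hgs : Summable g := (summable_geometric_of_lt_one hgr0 hgr1).mul_left _
  have hfn : Summable (fun n => ‖f n‖) :=
    hfs.congr (fun n => (Real.norm_of_nonneg (by positivity)).symm)
  have hgn : Summable (fun n => ‖g n‖) :=
    hgs.congr (fun n => (Real.norm_of_nonneg (by positivity)).symm)
  have htsf : ∑' n, f n = 1 / (1 - x) ^ (m + 1) := tsumL1 m hxabs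
  have htsg : ∑' n, g n = 1 / (((m : ℝ) + 2) - x) := by
    rw [hg, tsum_mul_left, tsum_geometric_of_lt_one hgr0 hgr1]
    have h1 : ((m : ℝ) + 2) - x ≠ 0 := ne_of_gt hm2x
    have h2 : ((m : ℝ) + 2) ≠ 0 := ne_of_gt hm2
    field_simp
  have hprod := tsum_mul_tsum_eq_tsum_sum_range_of_summable_norm hfn hgn
  have hCs : Summable (fun n => ∑ k ∈ range (n + 1), f k * g (n - k)) :=
    (summable_norm_sum_mul_range_of_summable_norm hfn hgn).of_norm
  have hinner : ∀ n : ℕ, ∑ k ∈ range (n + 1), f k * g (n - k)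
      = x ^ n * ∑ k ∈ range (n + 1), ((k + m).choose m : ℝ) * (1 / ((m : ℝ) + 2)) ^ (n - k + 1) := by
    intro n
    rw [Finset.mul_sum]
    apply Finset.sum_congr rfl
    intro k hk
    rw [Finset.mem_range] at hk
    have hxk : x ^ k * x ^ (n - k) = x ^ n := by
      rw [← pow_add]; congr 1; omega
    rw [hf, hg]
    beta_reduce
    rw [← hxk, div_eq_mul_one_div x, mul_pow]
    ring
  have hterm : ∀ n : ℕ, ((n + (m + 1)).choose (m + 1) : ℝ) * x ^ n / ((n : ℝ) + m + 2)
      ≤ ∑ k ∈ range (n + 1), f k * g (n - k) := by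
    intro n
    rw [hinner n]
    have h1 : ((n + (m + 1)).choose (m + 1) : ℝ) * x ^ n / ((n : ℝ) + m + 2)
        = x ^ n * (((n + (m + 1)).choose (m + 1) : ℝ) / ((n : ℝ) + m + 2)) := by ring
    rw [h1]
    exact mul_le_mul_of_nonneg_left (Ble m n) (by positivity)
  calc ∑' n : ℕ, ((n + (m + 1)).choose (m + 1) : ℝ) * x ^ n / ((n : ℝ) + m + 2)
      < ∑' n, ∑ k ∈ range (n + 1), f k * g (n - k) := by
        refine Summable.tsum_lt_tsum_of_nonneg (i := 1) (fun n => by positivity) hterm ?_ hCs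
        rw [hinner 1]
        have e1 : ((1 + (m + 1)).choose (m + 1) : ℝ) = (m : ℝ) + 2 := by
          rw [show 1 + (m + 1) = (m + 1) + 1 from by omega, Nat.choose_succ_self_right]
          push_cast; ring
        have e2 : ∑ k ∈ range (1 + 1), ((k + m).choose m : ℝ) * (1 / ((m : ℝ) + 2)) ^ (1 - k + 1)
            = (((m : ℝ) ^ 2 + 3 * m + 3) / (((m : ℝ) + 2) ^ 2)) := by
          rw [Finset.sum_range_succ, Finset.sum_range_one,
            show (1 : ℕ) + m = m + 1 from by omega, Nat.choose_succ_self_right]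
          norm_num [Nat.choose_self]
          field_simp
          ring
        rw [e1, e2, pow_one]
        have hd : ((1 : ℕ) : ℝ) + (m : ℝ) + 2 = (m : ℝ) + 3 := by push_cast; ring
        rw [hd, div_lt_iff₀ (by positivity)]
        have hkey : ((m : ℝ) + 2) ^ 3 < ((m : ℝ) + 3) * (((m : ℝ)) ^ 2 + 3 * m + 3) := by nlinarith
        have h3 : x * (((m : ℝ) ^ 2 + 3 * m + 3) / (((m : ℝ) + 2) ^ 2)) * ((m : ℝ) + 3)
            = x * (((m : ℝ) ^ 2 + 3 * m + 3) * ((m : ℝ) + 3)) / (((m : ℝ) + 2) ^ 2) := by ring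
        rw [h3, lt_div_iff₀ (by positivity)]
        nlinarith [mul_lt_mul_of_pos_left hkey hx0]
    _ = (∑' n, f n) * ∑' n, g n := hprod.symm
    _ = 1 / ((1 - x) ^ (m + 1) * (((m : ℝ) + 2) - x)) := by
        rw [htsf, htsg, div_mul_div_comm, mul_one]
end core

/-- Expectation of `f(N)` where `N` is negative binomial with parameters `s` and `q`:
`E[f(N)] = Σ_{n ≥ s} f(n) C(n−1, s−1) q^s (1−q)^{n−s}`, written with `n = s + k`. -/
noncomputable def negbinExp (s : ℕ) (q : ℝ) (f : ℕ → ℝ) : ℝ :=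
  ∑' k : ℕ, ((s + k - 1).choose (s - 1) : ℝ) * q ^ s * (1 - q) ^ k * f (s + k)

/-- Expectation of `f(N₁, N₂)` for independent negative binomials with parameters
`(s₁, q₁)` and `(s₂, q₂)`. -/
noncomputable def negbinExp2 (s₁ : ℕ) (q₁ : ℝ) (s₂ : ℕ) (q₂ : ℝ) (f : ℕ → ℕ → ℝ) : ℝ :=
  ∑' k₁ : ℕ, ∑' k₂ : ℕ,
    ((s₁ + k₁ - 1).choose (s₁ - 1) : ℝ) * q₁ ^ s₁ * (1 - q₁) ^ k₁ *
      (((s₂ + k₂ - 1).choose (s₂ - 1) : ℝ) * q₂ ^ s₂ * (1 - q₂) ^ k₂) *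
      f (s₁ + k₁) (s₂ + k₂)

/-- The m-th harmonic number `H_m = Σ_{k=1}^m 1/k`, `H_0 = 0`. -/
noncomputable def H (m : ℕ) : ℝ := ∑ k ∈ Finset.range m, (1 : ℝ) / (k + 1)

/-- The odds estimator `ĝ = (r/(N₁−1))·(N₂/(r−1))`. -/
noncomputable def ghat (r : ℕ) (n₁ n₂ : ℕ) : ℝ :=
  ((r : ℝ) / ((n₁ : ℝ) - 1)) * ((n₂ : ℝ) / ((r : ℝ) - 1))

private lemma negbin2_factor (s₁ s₂ : ℕ) (q₁ q₂ : ℝ) (f₁ f₂ : ℕ → ℝ) :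
    negbinExp2 s₁ q₁ s₂ q₂ (fun n₁ n₂ => f₁ n₁ * f₂ n₂)
      = (∑' k : ℕ, ((s₁ + k - 1).choose (s₁ - 1) : ℝ) * q₁ ^ s₁ * (1 - q₁) ^ k * f₁ (s₁ + k))
        * ∑' k : ℕ, ((s₂ + k - 1).choose (s₂ - 1) : ℝ) * q₂ ^ s₂ * (1 - q₂) ^ k * f₂ (s₂ + k) := by
  unfold negbinExp2
  rw [← tsum_mul_right]
  apply tsum_congr; intro k₁
  rw [← tsum_mul_left]
  apply tsum_congr; intro k₂
  ring

section moments

private lemma sumA1 (m : ℕ) {p : ℝ} (hp0 : 0 < p) (hp1 : p < 1) :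
    ∑' k : ℕ, ((m + 2 + 1 + k - 1).choose (m + 2 + 1 - 1) : ℝ) * p ^ (m + 2 + 1) * (1 - p) ^ k
        * (((m + 2 : ℕ) : ℝ) / (((m + 2 + 1 + k : ℕ) : ℝ) - 1)) = p := by
  have hx : |1 - p| < 1 := by rw [abs_of_pos (by linarith)]; linarith
  have e : ∀ k : ℕ, ((m + 2 + 1 + k - 1).choose (m + 2 + 1 - 1) : ℝ) * p ^ (m + 2 + 1) * (1 - p) ^ k
        * (((m + 2 : ℕ) : ℝ) / (((m + 2 + 1 + k : ℕ) : ℝ) - 1))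
      = p ^ (m + 2 + 1) * (((k + (m + 1)).choose (m + 1) : ℝ) * (1 - p) ^ k) := by
    intro k
    have hc := choose_id_real (k + m + 1) (m + 1)
    rw [show k + m + 1 + 1 = k + (m + 1) + 1 from by omega,
      show k + m + 1 = k + (m + 1) from by omega] at hc
    rw [show m + 2 + 1 + k - 1 = k + (m + 1) + 1 from by omega,
      show m + 2 + 1 - 1 = (m + 1) + 1 from by omega]
    have hden : (((m + 2 + 1 + k : ℕ) : ℝ) - 1) = (k : ℝ) + (m + 1) + 1 := by push_cast; ring
    rw [hden]
    have hdne : ((k : ℝ) + (m + 1) + 1) ≠ 0 := by positivity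
    push_cast at hc ⊢
    have hinv : ((k : ℝ) + (m + 1) + 1) * ((k : ℝ) + (m + 1) + 1)⁻¹ = 1 := mul_inv_cancel₀ hdne
    linear_combination (p ^ (m + 2 + 1) * (1 - p) ^ k * ((k : ℝ) + (m + 1) + 1)⁻¹) * hc
      + (p ^ (m + 2 + 1) * (1 - p) ^ k * ((k + (m + 1)).choose (m + 1) : ℝ)) * hinv
  rw [tsum_congr e, tsum_mul_left, tsumL1 (m + 1) hx, show (1 : ℝ) - (1 - p) = p from by ring,
    show m + 2 + 1 = (m + 1 + 1) + 1 from by omega, pow_succ]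
  field_simp

private lemma sumB1 (m : ℕ) {p : ℝ} (hp0 : 0 < p) (hp1 : p < 1) :
    ∑' k : ℕ, ((m + 2 - 1 + k - 1).choose (m + 2 - 1 - 1) : ℝ) * (1 - p) ^ (m + 2 - 1)
        * (1 - (1 - p)) ^ k * ((((m + 2 - 1 + k : ℕ) : ℝ)) / (((m + 2 : ℕ) : ℝ) - 1))
      = 1 / (1 - p) := by
  have hp' : |p| < 1 := by rw [abs_of_pos hp0]; linarith
  have h1p : (0 : ℝ) < 1 - p := by linarith
  have e : ∀ k : ℕ, ((m + 2 - 1 + k - 1).choose (m + 2 - 1 - 1) : ℝ) * (1 - p) ^ (m + 2 - 1)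
        * (1 - (1 - p)) ^ k * ((((m + 2 - 1 + k : ℕ) : ℝ)) / (((m + 2 : ℕ) : ℝ) - 1))
      = ((1 - p) ^ (m + 1) / ((m : ℝ) + 1)) * (((k + m).choose m : ℝ) * p ^ k * ((k : ℝ) + m + 1)) := by
    intro k
    rw [show m + 2 - 1 + k - 1 = k + m from by omega, show m + 2 - 1 - 1 = m from by omega,
      show m + 2 - 1 = m + 1 from by omega, show (1 : ℝ) - (1 - p) = p from by ring]
    have hden : (((m + 1 + k : ℕ) : ℝ)) = (k : ℝ) + m + 1 := by push_cast; ring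
    rw [hden]
    have h2 : (((m + 2 : ℕ) : ℝ) - 1) = (m : ℝ) + 1 := by push_cast; ring
    rw [h2]
    ring
  rw [tsum_congr e, tsum_mul_left, tsumL2 m hp']
  have hne : (1 - p) ≠ 0 := ne_of_gt h1p
  have hm1 : ((m : ℝ) + 1) ≠ 0 := by positivity
  field_simp
  ring

private lemma sumA2 (m : ℕ) {p : ℝ} (hp0 : 0 < p) (hp1 : p < 1) :
    ∑' k : ℕ, ((m + 2 + 1 + k - 1).choose (m + 2 + 1 - 1) : ℝ) * p ^ (m + 2 + 1) * (1 - p) ^ k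
        * ((((m + 2 : ℕ) : ℝ) / (((m + 2 + 1 + k : ℕ) : ℝ) - 1)) ^ 2)
      < ((m : ℝ) + 2) * p ^ 2 / ((m : ℝ) + 1 + p) := by
  have h1p : (0 : ℝ) < 1 - p := by linarith
  have e : ∀ k : ℕ, ((m + 2 + 1 + k - 1).choose (m + 2 + 1 - 1) : ℝ) * p ^ (m + 2 + 1) * (1 - p) ^ k
        * ((((m + 2 : ℕ) : ℝ) / (((m + 2 + 1 + k : ℕ) : ℝ) - 1)) ^ 2)
      = (p ^ (m + 2 + 1) * ((m : ℝ) + 2))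
          * (((k + (m + 1)).choose (m + 1) : ℝ) * (1 - p) ^ k / ((k : ℝ) + m + 2)) := by
    intro k
    have hc := choose_id_real (k + m + 1) (m + 1)
    rw [show k + m + 1 + 1 = k + (m + 1) + 1 from by omega,
      show k + m + 1 = k + (m + 1) from by omega] at hc
    rw [show m + 2 + 1 + k - 1 = k + (m + 1) + 1 from by omega,
      show m + 2 + 1 - 1 = (m + 1) + 1 from by omega]
    have hden : (((m + 2 + 1 + k : ℕ) : ℝ) - 1) = (k : ℝ) + (m + 1) + 1 := by push_cast; ring
    rw [hden]
    have hdne : ((k : ℝ) + (m + 1) + 1) ≠ 0 := by positivity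
    push_cast at hc ⊢
    have hinv : ((k : ℝ) + (m + 1) + 1) * ((k : ℝ) + (m + 1) + 1)⁻¹ = 1 := mul_inv_cancel₀ hdne
    linear_combination (p ^ (m + 2 + 1) * (1 - p) ^ k * ((m : ℝ) + 2) * ((k : ℝ) + (m + 1) + 1)⁻¹ ^ 2) * hc
      + (p ^ (m + 2 + 1) * (1 - p) ^ k * ((m : ℝ) + 2) * ((k + (m + 1)).choose (m + 1) : ℝ) * ((k : ℝ) + (m + 1) + 1)⁻¹) * hinv
  rw [tsum_congr e, tsum_mul_left]
  have hcore := core m h1p (by linarith)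
  have hpos : (0 : ℝ) < p ^ (m + 2 + 1) * ((m : ℝ) + 2) := by positivity
  calc (p ^ (m + 2 + 1) * ((m : ℝ) + 2))
        * ∑' k : ℕ, (((k + (m + 1)).choose (m + 1) : ℝ) * (1 - p) ^ k / ((k : ℝ) + m + 2))
      < (p ^ (m + 2 + 1) * ((m : ℝ) + 2))
          * (1 / ((1 - (1 - p)) ^ (m + 1) * (((m : ℝ) + 2) - (1 - p)))) := by
        apply mul_lt_mul_of_pos_left _ hpos
        convert hcore using 2
    _ = ((m : ℝ) + 2) * p ^ 2 / ((m : ℝ) + 1 + p) := by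
        rw [show (1 : ℝ) - (1 - p) = p from by ring,
          show ((m : ℝ) + 2) - (1 - p) = (m : ℝ) + 1 + p from by ring,
          show m + 2 + 1 = (m + 1) + 2 from by omega, pow_add]
        have hne1 : p ^ (m + 1) ≠ 0 := by positivity
        have hne2 : (m : ℝ) + 1 + p ≠ 0 := by positivity
        field_simp

private lemma sumB2 (m : ℕ) {p : ℝ} (hp0 : 0 < p) (hp1 : p < 1) :
    ∑' k : ℕ, ((m + 2 - 1 + k - 1).choose (m + 2 - 1 - 1) : ℝ) * (1 - p) ^ (m + 2 - 1)
        * (1 - (1 - p)) ^ k * (((((m + 2 - 1 + k : ℕ) : ℝ)) / (((m + 2 : ℕ) : ℝ) - 1)) ^ 2)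
      = ((m : ℝ) + 1 + p) / (((m : ℝ) + 1) * (1 - p) ^ 2) := by
  have hp' : |p| < 1 := by rw [abs_of_pos hp0]; linarith
  have h1p : (0 : ℝ) < 1 - p := by linarith
  have e : ∀ k : ℕ, ((m + 2 - 1 + k - 1).choose (m + 2 - 1 - 1) : ℝ) * (1 - p) ^ (m + 2 - 1)
        * (1 - (1 - p)) ^ k * (((((m + 2 - 1 + k : ℕ) : ℝ)) / (((m + 2 : ℕ) : ℝ) - 1)) ^ 2)
      = ((1 - p) ^ (m + 1) / (((m : ℝ) + 1)) ^ 2)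
          * (((k + m).choose m : ℝ) * p ^ k * ((k : ℝ) + m + 1) ^ 2) := by
    intro k
    rw [show m + 2 - 1 + k - 1 = k + m from by omega, show m + 2 - 1 - 1 = m from by omega,
      show m + 2 - 1 = m + 1 from by omega, show (1 : ℝ) - (1 - p) = p from by ring]
    have hden : (((m + 1 + k : ℕ) : ℝ)) = (k : ℝ) + m + 1 := by push_cast; ring
    rw [hden]
    have h2 : (((m + 2 : ℕ) : ℝ) - 1) = (m : ℝ) + 1 := by push_cast; ring
    rw [h2]
    have hm1 : ((m : ℝ) + 1) ≠ 0 := by positivity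
    field_simp
  rw [tsum_congr e, tsum_mul_left, tsumL3 m hp']
  have hne : (1 - p) ≠ 0 := ne_of_gt h1p
  have hm1 : ((m : ℝ) + 1) ≠ 0 := by positivity
  field_simp
  ring

end moments

theorem odds_estimator_relative_variance_guar (r : ℕ) (hr : 2 ≤ r) (p : ℝ)
    (hp0 : 0 < p) (hp1 : p < 1) :
    (negbinExp2 (r + 1) p (r - 1) (1 - p) (fun n₁ n₂ => (ghat r n₁ n₂) ^ 2) -
        (negbinExp2 (r + 1) p (r - 1) (1 - p) (ghat r)) ^ 2) / (p / (1 - p)) ^ 2 <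
      1 / ((r : ℝ) - 1) := by
  obtain ⟨m, rfl⟩ : ∃ m, r = m + 2 := ⟨r - 2, by omega⟩
  have h1p : (0 : ℝ) < 1 - p := by linarith
  have hm1 : (0 : ℝ) < (m : ℝ) + 1 := by positivity
  have hE1 : negbinExp2 (m + 2 + 1) p (m + 2 - 1) (1 - p) (ghat (m + 2)) = p / (1 - p) := by
    have hg : ghat (m + 2) = fun n₁ n₂ =>
        (fun n : ℕ => ((m + 2 : ℕ) : ℝ) / ((n : ℝ) - 1)) n₁
          * (fun n : ℕ => ((n : ℝ)) / (((m + 2 : ℕ) : ℝ) - 1)) n₂ := rfl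
    rw [hg, negbin2_factor, sumA1 m hp0 hp1, sumB1 m hp0 hp1, mul_one_div]
  have hE2 : negbinExp2 (m + 2 + 1) p (m + 2 - 1) (1 - p)
      (fun n₁ n₂ => (ghat (m + 2) n₁ n₂) ^ 2)
      < ((m : ℝ) + 2) * p ^ 2 / (((m : ℝ) + 1) * (1 - p) ^ 2) := by
    have hgsq : (fun n₁ n₂ : ℕ => (ghat (m + 2) n₁ n₂) ^ 2) = fun n₁ n₂ =>
        (fun n : ℕ => (((m + 2 : ℕ) : ℝ) / ((n : ℝ) - 1)) ^ 2) n₁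
          * (fun n : ℕ => (((n : ℝ)) / (((m + 2 : ℕ) : ℝ) - 1)) ^ 2) n₂ := by
      funext n₁ n₂
      simp only [ghat, mul_pow]
    rw [hgsq, negbin2_factor, sumB2 m hp0 hp1]
    have hc : (0 : ℝ) < ((m : ℝ) + 1 + p) / (((m : ℝ) + 1) * (1 - p) ^ 2) :=
      div_pos (by linarith) (mul_pos hm1 (pow_pos h1p 2))
    calc (∑' k : ℕ, ((m + 2 + 1 + k - 1).choose (m + 2 + 1 - 1) : ℝ) * p ^ (m + 2 + 1)
            * (1 - p) ^ k * ((((m + 2 : ℕ) : ℝ) / (((m + 2 + 1 + k : ℕ) : ℝ) - 1)) ^ 2))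
          * (((m : ℝ) + 1 + p) / (((m : ℝ) + 1) * (1 - p) ^ 2))
        < (((m : ℝ) + 2) * p ^ 2 / ((m : ℝ) + 1 + p))
            * (((m : ℝ) + 1 + p) / (((m : ℝ) + 1) * (1 - p) ^ 2)) :=
          mul_lt_mul_of_pos_right (sumA2 m hp0 hp1) hc
      _ = ((m : ℝ) + 2) * p ^ 2 / (((m : ℝ) + 1) * (1 - p) ^ 2) := by
          have h1 : ((m : ℝ) + 1 + p) ≠ 0 := by positivity
          have h2 : (1 - p) ≠ 0 := ne_of_gt h1p
          have h3 : ((m : ℝ) + 1) ≠ 0 := ne_of_gt hm1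
          field_simp
  rw [hE1]
  have hd : ((m + 2 : ℕ) : ℝ) - 1 = (m : ℝ) + 1 := by push_cast; ring
  rw [hd]
  have hg2 : (0 : ℝ) < (p / (1 - p)) ^ 2 := by positivity
  rw [div_lt_div_iff₀ hg2 hm1]
  have hgg : (p / (1 - p)) ^ 2 = p ^ 2 / (1 - p) ^ 2 := div_pow p (1 - p) 2
  have hkey : (((m : ℝ) + 2) * p ^ 2 / (((m : ℝ) + 1) * (1 - p) ^ 2)) * ((m : ℝ) + 1)
      = ((m : ℝ) + 2) * (p ^ 2 / (1 - p) ^ 2) := by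
    have h2 : (1 - p) ≠ 0 := ne_of_gt h1p
    have h3 : ((m : ℝ) + 1) ≠ 0 := ne_of_gt hm1
    field_simp
  nlinarith [mul_lt_mul_of_pos_right hE2 hm1]
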